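/- Suppose G is an infinite prime graph that is edge-stable (omits half-graphs of some fixed finite height), such that for some n every three distinct vertices admit a chain of length at most n between the first two and the third, and suppose G contains an infinite induced perfect matching. Then G contains, as an induced subgraph, one of the following or the complement of one of the following: the 1-subdivision K^{(1)}_{1,ω} of the infinite star K_{1,ω}, the line graph L(K_{2,ω}), or a spider with infinitely many legs. -/

import Mathlib

variable {V : Type*}

def GraphModule (G : SimpleGraph V) (X : Set V) : Prop :=
  ∀ v ∉ X, (∀ x ∈ X, G.Adj v x) ∨ (∀ x ∈ X, ¬ G.Adj v x)

def IsPrimeGraph (G : SimpleGraph V) : Prop :=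
  ∀ X : Set V, GraphModule G X → X.Subsingleton ∨ X = Set.univ

structure GraphChain (G : SimpleGraph V) (I : Set V) (w : V) (m : ℕ)
    (v : Fin (m + 1) → V) : Prop where
  two_le : 2 ≤ m
  inj : Function.Injective v
  mem0 : v 0 ∈ I
  mem1 : v 1 ∈ I
  not_mem : ∀ i : Fin (m + 1), 2 ≤ (i : ℕ) → v i ∉ I
  last_eq : v (Fin.last m) = w
  uniq : ∀ i : Fin (m + 1), 0 < (i : ℕ) →
    (∀ j : Fin (m + 1), (j : ℕ) < (i : ℕ) → (G.Adj (v i) (v j) ↔ (j : ℕ) + 1 = (i : ℕ))) ∨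
    (∀ j : Fin (m + 1), (j : ℕ) < (i : ℕ) → (¬ G.Adj (v i) (v j) ↔ (j : ℕ) + 1 = (i : ℕ)))

def HasChain (G : SimpleGraph V) (I : Set V) (w : V) : Prop :=
  ∃ m v, GraphChain G I w m v

def HasThinSpider (G : SimpleGraph V) (ι : Type*) : Prop :=
  ∃ a b : ι → V, Function.Injective a ∧ Function.Injective b ∧ (∀ i j, a i ≠ b j) ∧
    (∀ i j, i ≠ j → ¬ G.Adj (a i) (a j)) ∧ (∀ i j, i ≠ j → G.Adj (b i) (b j)) ∧
    (∀ i j, G.Adj (a i) (b j) ↔ i = j)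

def HasThickSpider (G : SimpleGraph V) (ι : Type*) : Prop :=
  ∃ a b : ι → V, Function.Injective a ∧ Function.Injective b ∧ (∀ i j, a i ≠ b j) ∧
    (∀ i j, i ≠ j → ¬ G.Adj (a i) (a j)) ∧ (∀ i j, i ≠ j → G.Adj (b i) (b j)) ∧
    (∀ i j, G.Adj (a i) (b j) ↔ i ≠ j)

def HasSpider (G : SimpleGraph V) (ι : Type*) : Prop :=
  HasThinSpider G ι ∨ HasThickSpider G ι

def HasHalfGraph (G : SimpleGraph V) (ι : Type*) [Preorder ι] : Prop :=
  ∃ a b : ι → V, Function.Injective a ∧ Function.Injective b ∧ (∀ i j, a i ≠ b j) ∧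
    (∀ i j, G.Adj (a i) (b j) ↔ i ≤ j)

def HasBipartiteHalfGraph (G : SimpleGraph V) (ι : Type*) [Preorder ι] : Prop :=
  ∃ a b : ι → V, Function.Injective a ∧ Function.Injective b ∧ (∀ i j, a i ≠ b j) ∧
    (∀ i j, i ≠ j → ¬ G.Adj (a i) (a j)) ∧ (∀ i j, i ≠ j → ¬ G.Adj (b i) (b j)) ∧
    (∀ i j, G.Adj (a i) (b j) ↔ i ≤ j)

def HasHalfSplit (G : SimpleGraph V) (ι : Type*) [Preorder ι] : Prop :=
  ∃ a b : ι → V, Function.Injective a ∧ Function.Injective b ∧ (∀ i j, a i ≠ b j) ∧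
    (∀ i j, i ≠ j → ¬ G.Adj (a i) (a j)) ∧ (∀ i j, i ≠ j → G.Adj (b i) (b j)) ∧
    (∀ i j, G.Adj (a i) (b j) ↔ i ≤ j)

def HasMatching (G : SimpleGraph V) (ι : Type*) : Prop :=
  ∃ a b : ι → V, Function.Injective a ∧ Function.Injective b ∧ (∀ i j, a i ≠ b j) ∧
    (∀ i j, i ≠ j → ¬ G.Adj (a i) (a j)) ∧ (∀ i j, i ≠ j → ¬ G.Adj (b i) (b j)) ∧
    (∀ i j, G.Adj (a i) (b j) ↔ i = j)

def HasHSplitI (G : SimpleGraph V) (n : ℕ) : Prop :=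
  ∃ (a b : Fin n → V) (c : V), Function.Injective a ∧ Function.Injective b ∧
    (∀ i j, a i ≠ b j) ∧ (∀ i, c ≠ a i) ∧ (∀ j, c ≠ b j) ∧
    (∀ i j, i ≠ j → ¬ G.Adj (a i) (a j)) ∧ (∀ i j, i ≠ j → G.Adj (b i) (b j)) ∧
    (∀ i j, G.Adj (a i) (b j) ↔ i ≤ j) ∧
    (∀ i, G.Adj c (a i)) ∧ (∀ j, ¬ G.Adj c (b j))

def HasHStar (G : SimpleGraph V) (n : ℕ) : Prop :=
  ∃ (a b : Fin n → V) (c : V), Function.Injective a ∧ Function.Injective b ∧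
    (∀ i j, a i ≠ b j) ∧ (∀ i, c ≠ a i) ∧ (∀ j, c ≠ b j) ∧
    (∀ i j, i ≠ j → ¬ G.Adj (a i) (a j)) ∧ (∀ i j, i ≠ j → G.Adj (b i) (b j)) ∧
    (∀ i j, G.Adj (a i) (b j) ↔ i ≤ j) ∧
    (∀ i, G.Adj c (a i) ↔ (i : ℕ) = 0) ∧ (∀ j, ¬ G.Adj c (b j))

def HasSubdivStar (G : SimpleGraph V) (ι : Type*) : Prop :=
  ∃ (c : V) (s l : ι → V), Function.Injective s ∧ Function.Injective l ∧
    (∀ i j, s i ≠ l j) ∧ (∀ i, c ≠ s i) ∧ (∀ i, c ≠ l i) ∧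
    (∀ i, G.Adj c (s i)) ∧ (∀ i, ¬ G.Adj c (l i)) ∧
    (∀ i j, i ≠ j → ¬ G.Adj (s i) (s j)) ∧ (∀ i j, i ≠ j → ¬ G.Adj (l i) (l j)) ∧
    (∀ i j, G.Adj (s i) (l j) ↔ i = j)

def HasLineK2 (G : SimpleGraph V) (ι : Type*) : Prop :=
  ∃ e : Fin 2 → ι → V, Function.Injective (fun p : Fin 2 × ι => e p.1 p.2) ∧
    ∀ k k' i i', (k, i) ≠ (k', i') →
      (G.Adj (e k i) (e k' i') ↔ (k = k' ∨ i = i'))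



section AuxiliaryLemmas


section Infra

-- T1: infinite pigeonhole as subsequence
theorem myT1 {F : Type*} [Finite F] (P : ℕ → F) :
    ∃ g : ℕ → ℕ, StrictMono g ∧ ∃ e, ∀ t, P (g t) = e := by
  obtain ⟨e, he⟩ := Finite.exists_infinite_fiber P
  have hinf : (setOf (fun n => P n = e)).Infinite := by
    rw [← Set.infinite_coe_iff]
    exact he
  exact ⟨Nat.nth (fun n => P n = e), Nat.nth_strictMono hinf,
    e, fun t => Nat.nth_mem_of_infinite hinf t⟩

-- T2: constant or injective subsequence
theorem myT2 {V : Type*} (w : ℕ → V) :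
    ∃ g : ℕ → ℕ, StrictMono g ∧
      ((∃ z, ∀ t, w (g t) = z) ∨ Function.Injective (w ∘ g)) := by
  classical
  by_cases hcase : ∃ z, {n | w n = z}.Infinite
  · obtain ⟨z, hz⟩ := hcase
    exact ⟨Nat.nth (fun n => w n = z), Nat.nth_strictMono hz,
      Or.inl ⟨z, fun t => Nat.nth_mem_of_infinite hz t⟩⟩
  · push_neg at hcase
    have hfin : ∀ s : Finset V, {n : ℕ | w n ∈ s}.Finite := by
      intro s
      have : {n : ℕ | w n ∈ s} ⊆ ⋃ z ∈ s, {n | w n = z} := by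
        intro n hn; simp only [Set.mem_iUnion]; exact ⟨w n, hn, rfl⟩
      exact Set.Finite.subset (Set.Finite.biUnion s.finite_toSet
        (fun z _ => by simpa [Set.not_infinite] using hcase z)) this
    have hex : ∀ p : ℕ × Finset V, ∃ N, p.1 < N ∧ w N ∉ p.2 := by
      intro p
      have : ({n : ℕ | w n ∈ p.2} ∪ Set.Iic p.1).Finite :=
        (hfin p.2).union (Set.finite_Iic p.1)
      obtain ⟨N, hN⟩ := (Set.Finite.infinite_compl this).nonempty
      simp only [Set.mem_compl_iff, Set.mem_union, Set.mem_setOf_eq, Set.mem_Iic,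
        not_or, not_le] at hN
      exact ⟨N, hN.2, hN.1⟩
    choose nxt hnxt1 hnxt2 using hex
    let q : ℕ → ℕ × Finset V := fun t =>
      Nat.rec (0, {w 0}) (fun _ p => (nxt p, insert (w (nxt p)) p.2)) t
    have hq : ∀ t, q (t + 1) = (nxt (q t), insert (w (nxt (q t))) (q t).2) := fun t => rfl
    have hlt : ∀ t, (q t).1 < (q (t + 1)).1 := by
      intro t; rw [hq]; exact hnxt1 (q t)
    have hmem : ∀ t, w ((q t).1) ∈ (q t).2 := by
      intro t; induction t with
      | zero => simp [q]
      | succ t _ => rw [hq]; exact Finset.mem_insert_self _ _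
    have hsub : ∀ s t, s ≤ t → (q s).2 ⊆ (q t).2 := by
      intro s t hst
      induction t with
      | zero =>
        have : s = 0 := by omega
        subst this; exact subset_rfl
      | succ t ih =>
        rcases Nat.lt_or_ge s (t+1) with h | h
        · rw [hq]; exact (ih (by omega)).trans (Finset.subset_insert _ _)
        · have : s = t + 1 := by omega
          subst this; exact subset_rfl
    have hnew : ∀ s t, s < t → w ((q t).1) ≠ w ((q s).1) := by
      intro s t hst heq
      obtain ⟨t', rfl⟩ := Nat.exists_eq_add_of_lt hst
      have h1 : w ((q s).1) ∈ (q (s + t')).2 := hsub s (s + t') (by omega) (hmem s)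
      have h2 : w ((q (s + t' + 1)).1) ∉ (q (s + t')).2 := by
        rw [hq]; exact hnxt2 (q (s + t'))
      rw [heq] at h2; exact h2 h1
    refine ⟨fun t => (q t).1, strictMono_nat_of_lt_succ hlt, Or.inr ?_⟩
    intro s t hst
    by_contra hne
    rcases Nat.lt_or_ge s t with h | h
    · exact hnew s t h hst.symm
    · exact hnew t s (by omega) hst

end Infra


-- T3: infinite Ramsey for pairs
theorem myRamsey {F : Type*} [Finite F] (c : ℕ → ℕ → F) :
    ∃ g : ℕ → ℕ, StrictMono g ∧ ∃ e, ∀ i j, i < j → c (g i) (g j) = e := by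
  classical
  have key : ∀ s : {s : ℕ → ℕ // StrictMono s},
      ∃ (g : ℕ → ℕ) (e : F), StrictMono g ∧ ∀ t, c (s.1 0) (s.1 (g t + 1)) = e := by
    intro s
    obtain ⟨g, hg, e, he⟩ := myT1 (fun t => c (s.1 0) (s.1 (t + 1)))
    exact ⟨g, e, hg, he⟩
  choose gg ee hgmono hconst using key
  let step : {s : ℕ → ℕ // StrictMono s} → {s : ℕ → ℕ // StrictMono s} :=
    fun p => ⟨fun t => p.1 (gg p t + 1), by
      intro a b hab
      exact p.2 (by have := hgmono p hab; omega)⟩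
  let S : ℕ → {s : ℕ → ℕ // StrictMono s} :=
    fun r => Nat.rec ⟨id, strictMono_id⟩ (fun _ p => step p) r
  have hstep : ∀ r t, (S (r + 1)).1 t = (S r).1 (gg (S r) t + 1) := fun r t => rfl
  set h : ℕ → ℕ := fun r => (S r).1 0 with hh
  have hmono : StrictMono h := by
    apply strictMono_nat_of_lt_succ
    intro r
    have : (S (r + 1)).1 0 = (S r).1 (gg (S r) 0 + 1) := hstep r 0
    rw [hh]; simp only []; rw [this]
    exact (S r).2 (by omega)
  have SA : ∀ p r t, ∃ t2, (S (r + 1 + p)).1 t = (S (r + 1)).1 t2 := by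
    intro p
    induction p with
    | zero => exact fun r t => ⟨t, rfl⟩
    | succ p ih =>
      intro r t
      have h1 : (S (r + 1 + (p + 1))).1 t = (S (r + 1 + p)).1 (gg (S (r + 1 + p)) t + 1) := by
        have : r + 1 + (p + 1) = (r + 1 + p) + 1 := by omega
        rw [this]
      obtain ⟨t2, ht2⟩ := ih r (gg (S (r + 1 + p)) t + 1)
      exact ⟨t2, by rw [h1, ht2]⟩
  have hdi : ∀ i j, i < j → c (h i) (h j) = ee (S i) := by
    intro i j hij
    obtain ⟨t2, ht2⟩ : ∃ t2, (S j).1 0 = (S (i + 1)).1 t2 := by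
      have : j = i + 1 + (j - i - 1) := by omega
      rw [this]; exact SA (j - i - 1) i 0
    have : h j = (S i).1 (gg (S i) t2 + 1) := by
      rw [hh]; simp only []; rw [ht2]
    rw [this]
    exact hconst (S i) t2
  obtain ⟨g2, hg2, e, he⟩ := myT1 (fun r => ee (S r))
  refine ⟨h ∘ g2, hmono.comp hg2, e, fun i j hij => ?_⟩
  show c (h (g2 i)) (h (g2 j)) = e
  rw [hdi (g2 i) (g2 j) (hg2 hij)]
  exact he i
section Outcomes
variable {V : Type*} {G : SimpleGraph V}

def MOutcome (G : SimpleGraph V) : Prop :=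
  (HasSubdivStar G ℕ ∨ HasSubdivStar Gᶜ ℕ) ∨
    (HasLineK2 G ℕ ∨ HasLineK2 Gᶜ ℕ) ∨
    (HasSpider G ℕ ∨ HasSpider Gᶜ ℕ)

structure IndMatch (G : SimpleGraph V) (x y : ℕ → V) : Prop where
  xinj : Function.Injective x
  yinj : Function.Injective y
  xind : ∀ i j, i ≠ j → ¬ G.Adj (x i) (x j)
  yind : ∀ i j, i ≠ j → ¬ G.Adj (y i) (y j)
  cross : ∀ i j, G.Adj (x i) (y j) ↔ i = j

theorem IndMatch.symm {x y : ℕ → V} (h : IndMatch G x y) : IndMatch G y x where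
  xinj := h.yinj
  yinj := h.xinj
  xind := h.yind
  yind := h.xind
  cross := fun i j => by
    rw [SimpleGraph.adj_comm]
    rw [h.cross j i]
    exact eq_comm

theorem IndMatch.comp {x y : ℕ → V} (h : IndMatch G x y) {g : ℕ → ℕ}
    (hg : Function.Injective g) : IndMatch G (x ∘ g) (y ∘ g) where
  xinj := h.xinj.comp hg
  yinj := h.yinj.comp hg
  xind := fun i j hij => h.xind _ _ (fun hh => hij (hg hh))
  yind := fun i j hij => h.yind _ _ (fun hh => hij (hg hh))
  cross := fun i j => by
    rw [Function.comp_apply, Function.comp_apply, h.cross]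
    exact ⟨fun hh => hg hh, fun hh => hh ▸ rfl⟩

theorem IndMatch.ne {x y : ℕ → V} (h : IndMatch G x y) : ∀ i j, x i ≠ y j := by
  intro i j heq
  by_cases hij : i = j
  · subst hij
    have := (h.cross i i).mpr rfl
    rw [heq] at this
    exact G.loopless.irrefl _ this
  · have := (h.cross i i).mpr rfl
    rw [heq] at this
    exact h.yind j i (fun hh => hij hh.symm) this

/-- subdivided star from an apex over an induced matching -/
theorem O1 {x y : ℕ → V} (hM : IndMatch G x y) (z : V)
    (hzx : ∀ i, G.Adj z (x i)) (hzy : ∀ i, ¬ G.Adj z (y i)) : HasSubdivStar G ℕ := by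
  refine ⟨z, x, y, hM.xinj, hM.yinj, hM.ne, ?_, ?_, hzx, hzy, hM.xind, hM.yind, hM.cross⟩
  · intro i heq
    exact G.loopless.irrefl _ (heq ▸ hzx i)
  · intro i heq
    have h1 : G.Adj (y i) (x (i + 1)) := heq ▸ hzx (i + 1)
    have := (hM.cross (i + 1) i).mp h1.symm
    omega

/-- thin spider -/
theorem O2 {x w : ℕ → V} (hxinj : Function.Injective x) (hwinj : Function.Injective w)
    (hxind : ∀ i j, i ≠ j → ¬ G.Adj (x i) (x j))
    (hwcl : ∀ i j, i ≠ j → G.Adj (w i) (w j))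
    (hcr : ∀ i j, G.Adj (x i) (w j) ↔ i = j) : HasThinSpider G ℕ := by
  have hne : ∀ i j, x i ≠ w j := by
    intro i j heq
    by_cases hij : i = j
    · subst hij
      have := (hcr i i).mpr rfl
      rw [heq] at this
      exact G.loopless.irrefl _ this
    · have h1 : G.Adj (x j) (w j) := (hcr j j).mpr rfl
      rw [← heq] at h1
      exact hxind j i (fun hh => hij hh.symm) h1
  exact ⟨x, w, hxinj, hwinj, hne, hxind, hwcl, hcr⟩

/-- thick spider -/
theorem O3 {x w : ℕ → V} (hxinj : Function.Injective x) (hwinj : Function.Injective w)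
    (hxind : ∀ i j, i ≠ j → ¬ G.Adj (x i) (x j))
    (hwcl : ∀ i j, i ≠ j → G.Adj (w i) (w j))
    (hcr : ∀ i j, G.Adj (x i) (w j) ↔ i ≠ j) : HasThickSpider G ℕ := by
  have hne : ∀ i j, x i ≠ w j := by
    intro i j heq
    by_cases hij : i = j
    · subst hij
      have h1 : G.Adj (x (i+1)) (w i) := (hcr (i+1) i).mpr (by omega)
      rw [← heq] at h1
      exact hxind (i+1) i (by omega) h1
    · have := (hcr i j).mpr hij
      rw [heq] at this
      exact G.loopless.irrefl _ this
  exact ⟨x, w, hxinj, hwinj, hne, hxind, hwcl, hcr⟩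

/-- line graph of K_{2,ω} in the complement, from two independent families
with off-diagonal cross adjacency -/
theorem O4 {x w : ℕ → V} (hxinj : Function.Injective x) (hwinj : Function.Injective w)
    (hxind : ∀ i j, i ≠ j → ¬ G.Adj (x i) (x j))
    (hwind : ∀ i j, i ≠ j → ¬ G.Adj (w i) (w j))
    (hcr : ∀ i j, G.Adj (x i) (w j) ↔ i ≠ j) : HasLineK2 Gᶜ ℕ := by
  have hne : ∀ i j, x i ≠ w j := by
    intro i j heq
    by_cases hij : i = j
    · subst hij
      have h1 : G.Adj (x (i+1)) (w i) := (hcr (i+1) i).mpr (by omega)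
      rw [← heq] at h1
      exact hxind (i+1) i (by omega) h1
    · have := (hcr i j).mpr hij
      rw [heq] at this
      exact G.loopless.irrefl _ this
  refine ⟨![x, w], ?_, ?_⟩
  · rintro ⟨k, i⟩ ⟨k', i'⟩ h
    simp only at h
    fin_cases k <;> fin_cases k' <;>
      simp only [Matrix.cons_val_zero, Matrix.cons_val_one, Matrix.head_cons] at h
    · exact Prod.ext rfl (hxinj h)
    · exact absurd h (hne i i')
    · exact absurd h.symm (hne i' i)
    · exact Prod.ext rfl (hwinj h)
  · rintro k k' i i' hne'
    fin_cases k <;> fin_cases k' <;>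
      simp only [Matrix.cons_val_zero, Matrix.cons_val_one, Matrix.head_cons,
        SimpleGraph.compl_adj]
    · have hii : i ≠ i' := fun hh => hne' (by rw [hh])
      constructor
      · intro _; exact Or.inl trivial
      · intro _; exact ⟨hxinj.ne hii, hxind i i' hii⟩
    · constructor
      · rintro ⟨-, hnadj⟩
        right
        by_contra hii
        exact hnadj ((hcr i i').mpr hii)
      · rintro (h01 | hii)
        · exact absurd h01 (by decide)
        · subst hii
          exact ⟨hne i i, fun hadj => (hcr i i).mp hadj rfl⟩
    · constructor
      · rintro ⟨-, hnadj⟩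
        right
        by_contra hii
        exact hnadj (((hcr i' i).mpr (Ne.symm hii)).symm)
      · rintro (h10 | hii)
        · exact absurd h10 (by decide)
        · subst hii
          exact ⟨(hne i i).symm, fun hadj => (hcr i i).mp hadj.symm rfl⟩
    · have hii : i ≠ i' := fun hh => hne' (by rw [hh])
      constructor
      · intro _; exact Or.inl trivial
      · intro _; exact ⟨hwinj.ne hii, hwind i i' hii⟩

end Outcomes
section Kills
variable {V : Type*} {G : SimpleGraph V} {k : ℕ}

/-- half graph from relation `Adj (x i) (w j) ↔ i ≤ j` with `x` independent -/
theorem HGle (hk : ¬ HasHalfGraph G (Fin k)) {x w : ℕ → V}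
    (hxinj : Function.Injective x) (hwinj : Function.Injective w)
    (hxind : ∀ i j, i ≠ j → ¬ G.Adj (x i) (x j))
    (hadj : ∀ i j, G.Adj (x i) (w j) ↔ i ≤ j) : False := by
  have hne : ∀ p q, x p ≠ w q := by
    intro p q heq
    have h1 : ¬ p ≤ q := by
      intro hpq
      have := (hadj p q).mpr hpq
      rw [← heq] at this
      exact G.loopless.irrefl _ this
    have h2 : G.Adj (x q) (w q) := (hadj q q).mpr le_rfl
    rw [← heq] at h2
    exact hxind q p (by omega) h2
  apply hk
  refine ⟨fun i => x i, fun j => w j, hxinj.comp Fin.val_injective,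
    hwinj.comp Fin.val_injective, fun i j => hne i j, fun i j => ?_⟩
  rw [hadj]
  exact (Fin.le_def).symm

/-- half graph from relation `Adj (x i) (w j) ↔ j ≤ i` with `x` independent -/
theorem HGge (hk : ¬ HasHalfGraph G (Fin k)) {x w : ℕ → V}
    (hxinj : Function.Injective x) (hwinj : Function.Injective w)
    (hxind : ∀ i j, i ≠ j → ¬ G.Adj (x i) (x j))
    (hadj : ∀ i j, G.Adj (x i) (w j) ↔ j ≤ i) : False := by
  have hne : ∀ p q, x p ≠ w q := by
    intro p q heq
    have h1 : ¬ q ≤ p := by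
      intro hpq
      have := (hadj p q).mpr hpq
      rw [← heq] at this
      exact G.loopless.irrefl _ this
    have h2 : G.Adj (x q) (w q) := (hadj q q).mpr le_rfl
    rw [← heq] at h2
    exact hxind q p (by omega) h2
  apply hk
  refine ⟨fun i => x (k - 1 - (i : ℕ)), fun j => w (k - 1 - (j : ℕ)),
    ?_, ?_, fun i j => hne _ _, fun i j => ?_⟩
  · intro i j hij
    have := hxinj hij
    have hi := i.isLt; have hj := j.isLt
    exact Fin.ext (by omega)
  · intro i j hij
    have := hwinj hij
    have hi := i.isLt; have hj := j.isLt
    exact Fin.ext (by omega)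
  · rw [hadj]
    have hi := i.isLt; have hj := j.isLt
    rw [Fin.le_def]
    omega

end Kills
section Step
variable {V : Type*} {G : SimpleGraph V} {k : ℕ}

theorem MO1 {G : SimpleGraph V} (h : HasSubdivStar G ℕ) : MOutcome G := Or.inl (Or.inl h)
theorem MO4 {G : SimpleGraph V} (h : HasLineK2 Gᶜ ℕ) : MOutcome G := Or.inr (Or.inl (Or.inr h))
theorem MOthin {G : SimpleGraph V} (h : HasThinSpider G ℕ) : MOutcome G :=
  Or.inr (Or.inr (Or.inl (Or.inl h)))
theorem MOthick {G : SimpleGraph V} (h : HasThickSpider G ℕ) : MOutcome G :=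
  Or.inr (Or.inr (Or.inl (Or.inr h)))

theorem mainStep (hk : ¬ HasHalfGraph G (Fin k)) {x y w : ℕ → V}
    (hM : IndMatch G x y) (hwx : ∀ i, G.Adj (w i) (x i)) (hwy : ∀ i, ¬ G.Adj (w i) (y i)) :
    MOutcome G ∨ ∃ g : ℕ → ℕ, StrictMono g ∧ IndMatch G (w ∘ g) (x ∘ g) := by
  classical
  obtain ⟨g0, hg0, hc⟩ := myT2 w
  rcases hc with ⟨z, hz⟩ | hWinj
  · -- constant case : apex
    left
    apply MO1
    refine O1 (hM.comp hg0.injective) z (fun i => ?_) (fun i => ?_)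
    · have := hwx (g0 i); rwa [hz i] at this
    · have := hwy (g0 i); rwa [hz i] at this
  · -- injective case : Ramsey
    obtain ⟨g1, hg1, ⟨t, pwx, qwx, pwy, qwy⟩, hE⟩ := myRamsey
      (fun i j => ((decide (G.Adj (w (g0 i)) (w (g0 j))) : Bool),
        (decide (G.Adj (w (g0 i)) (x (g0 j))) : Bool),
        (decide (G.Adj (w (g0 j)) (x (g0 i))) : Bool),
        (decide (G.Adj (w (g0 i)) (y (g0 j))) : Bool),
        (decide (G.Adj (w (g0 j)) (y (g0 i))) : Bool)))
    set X : ℕ → V := fun i => x (g0 (g1 i)) with hX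
    set Y : ℕ → V := fun i => y (g0 (g1 i)) with hY
    set W : ℕ → V := fun i => w (g0 (g1 i)) with hW
    have hMXY : IndMatch G X Y := (hM.comp hg0.injective).comp hg1.injective
    have hWinj2 : Function.Injective W := hWinj.comp hg1.injective
    have hwx2 : ∀ i, G.Adj (W i) (X i) := fun i => hwx (g0 (g1 i))
    have hwy2 : ∀ i, ¬ G.Adj (W i) (Y i) := fun i => hwy (g0 (g1 i))
    have hA : ∀ i j, i < j →
        (G.Adj (W i) (W j) ↔ t = true) ∧ (G.Adj (W i) (X j) ↔ pwx = true) ∧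
        (G.Adj (W j) (X i) ↔ qwx = true) ∧ (G.Adj (W i) (Y j) ↔ pwy = true) ∧
        (G.Adj (W j) (Y i) ↔ qwy = true) := by
      intro i j hij
      have h0 := hE i j hij
      simp only [Prod.mk.injEq] at h0
      obtain ⟨e1, e2, e3, e4, e5⟩ := h0
      refine ⟨?_, ?_, ?_, ?_, ?_⟩
      · rw [← e1]; exact decide_eq_true_iff.symm
      · rw [← e2]; exact decide_eq_true_iff.symm
      · rw [← e3]; exact decide_eq_true_iff.symm
      · rw [← e4]; exact decide_eq_true_iff.symm
      · rw [← e5]; exact decide_eq_true_iff.symm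
    -- kill mixed (w,x)
    by_cases hxk : pwx = qwx
    case neg =>
      exfalso
      rcases Bool.eq_false_or_eq_true pwx with h1 | h1 <;>
        rcases Bool.eq_false_or_eq_true qwx with h2 | h2
      · exact hxk (h1.trans h2.symm)
      · -- pwx = true, qwx = false : Adj (X a) (W b) ↔ b ≤ a
        refine HGge hk hMXY.xinj hWinj2 hMXY.xind (fun a b => ?_)
        rcases lt_trichotomy a b with h | h | h
        · rw [SimpleGraph.adj_comm, ((hA a b h).2.2.1)]
          simp [h2]; omega
        · subst h; simp [(hwx2 a).symm]
        · rw [SimpleGraph.adj_comm, ((hA b a h).2.1)]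
          simp [h1]; omega
      · -- pwx = false, qwx = true : Adj (X a) (W b) ↔ a ≤ b
        refine HGle hk hMXY.xinj hWinj2 hMXY.xind (fun a b => ?_)
        rcases lt_trichotomy a b with h | h | h
        · rw [SimpleGraph.adj_comm, ((hA a b h).2.2.1)]
          simp [h2]; omega
        · subst h; simp [(hwx2 a).symm]
        · rw [SimpleGraph.adj_comm, ((hA b a h).2.1)]
          simp [h1]; omega
      · exact hxk (h1.trans h2.symm)
    -- kill mixed (w,y)
    by_cases hyk : pwy = qwy
    case neg =>
      exfalso
      rcases Bool.eq_false_or_eq_true pwy with h1 | h1 <;>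
        rcases Bool.eq_false_or_eq_true qwy with h2 | h2
      · exact hyk (h1.trans h2.symm)
      · -- pwy = true, qwy = false : Adj (Y a) (W b) ↔ b < a
        refine HGge hk (hMXY.yinj.comp (add_left_injective 1)) hWinj2
          (fun i j hij => hMXY.yind (i + 1) (j + 1) (by omega)) (fun a b => ?_)
        show G.Adj (Y (a + 1)) (W b) ↔ b ≤ a
        rcases lt_trichotomy (a + 1) b with h | h | h
        · rw [SimpleGraph.adj_comm, ((hA (a+1) b h).2.2.2.2)]
          simp [h2]; omega
        · rw [← h, SimpleGraph.adj_comm]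
          exact iff_of_false (hwy2 (a+1)) (by omega)
        · rw [SimpleGraph.adj_comm, ((hA b (a+1) h).2.2.2.1)]
          simp [h1]; omega
      · -- pwy = false, qwy = true : Adj (Y a) (W (b+1)) ↔ a ≤ b
        refine HGle hk hMXY.yinj (hWinj2.comp (add_left_injective 1)) hMXY.yind
          (fun a b => ?_)
        show G.Adj (Y a) (W (b + 1)) ↔ a ≤ b
        rcases lt_trichotomy a (b + 1) with h | h | h
        · rw [SimpleGraph.adj_comm, ((hA a (b+1) h).2.2.2.2)]
          simp [h2]; omega
        · rw [h, SimpleGraph.adj_comm]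
          exact iff_of_false (hwy2 (b+1)) (by omega)
        · rw [SimpleGraph.adj_comm, ((hA (b+1) a h).2.2.2.1)]
          simp [h1]; omega
      · exact hyk (h1.trans h2.symm)
    -- now symmetric shapes
    rcases Bool.eq_false_or_eq_true pwy with hey | hey
    · -- pwy = true : (w,y) cross is off-diagonal : spider / line graph
      have hcro : ∀ i j, G.Adj (Y i) (W j) ↔ i ≠ j := by
        intro i j
        rcases lt_trichotomy i j with h | h | h
        · rw [SimpleGraph.adj_comm, ((hA i j h).2.2.2.2)]
          simp [← hyk, hey]; omega
        · subst h; exact iff_of_false (fun hadj => hwy2 i hadj.symm) (by omega)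
        · rw [SimpleGraph.adj_comm, ((hA j i h).2.2.2.1)]
          simp [hey]; omega
      left
      rcases Bool.eq_false_or_eq_true t with ht | ht
      · -- W clique : thick spider
        refine MOthick (O3 hMXY.yinj hWinj2 hMXY.yind (fun i j hij => ?_) hcro)
        rcases lt_trichotomy i j with h | h | h
        · exact ((hA i j h).1).mpr ht
        · exact absurd h hij
        · exact (((hA j i h).1).mpr ht).symm
      · -- W independent : line graph of complement
        refine MO4 (O4 hMXY.yinj hWinj2 hMXY.yind (fun i j hij => ?_) hcro)
        rcases lt_trichotomy i j with h | h | h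
        · rw [((hA i j h).1)]; simp [ht]
        · exact absurd h hij
        · rw [SimpleGraph.adj_comm, ((hA j i h).1)]; simp [ht]
    · -- pwy = false : (w,y) cross empty
      have hcrn : ∀ i j, ¬ G.Adj (W i) (Y j) := by
        intro i j
        rcases lt_trichotomy i j with h | h | h
        · rw [((hA i j h).2.2.2.1)]; simp [hey]
        · subst h; exact hwy2 i
        · rw [((hA j i h).2.2.2.2)]
          simp [← hyk, hey]
      rcases Bool.eq_false_or_eq_true pwx with hex | hex
      · -- pwx = true : (w,x) complete : apex over matching
        have hall : ∀ i j, G.Adj (W i) (X j) := by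
          intro i j
          rcases lt_trichotomy i j with h | h | h
          · exact ((hA i j h).2.1).mpr hex
          · subst h; exact hwx2 i
          · exact ((hA j i h).2.2.1).mpr (by rw [← hxk]; exact hex)
        left
        exact MO1 (O1 (hMXY.comp (add_left_injective 1)) (W 0)
          (fun i => hall 0 (i + 1)) (fun i => hcrn 0 (i + 1)))
      · -- pwx = false : (w,x) cross diagonal
        have hdia : ∀ i j, G.Adj (W i) (X j) ↔ i = j := by
          intro i j
          rcases lt_trichotomy i j with h | h | h
          · rw [((hA i j h).2.1)]; simp [hex]; omega
          · subst h; simp [hwx2 i]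
          · rw [((hA j i h).2.2.1)]; simp [← hxk, hex]; omega
        rcases Bool.eq_false_or_eq_true t with ht | ht
        · -- W clique : thin spider
          left
          refine MOthin (O2 hMXY.xinj hWinj2 hMXY.xind (fun i j hij => ?_) (fun i j => ?_))
          · rcases lt_trichotomy i j with h | h | h
            · exact ((hA i j h).1).mpr ht
            · exact absurd h hij
            · exact (((hA j i h).1).mpr ht).symm
          · rw [SimpleGraph.adj_comm, hdia j i]; exact eq_comm
        · -- survive : new matching (W, X)
          right
          refine ⟨g0 ∘ g1, hg0.comp hg1, ?_⟩
          have hWind : ∀ i j, i ≠ j → ¬ G.Adj (W i) (W j) := by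
            intro i j hij
            rcases lt_trichotomy i j with h | h | h
            · rw [((hA i j h).1)]; simp [ht]
            · exact absurd h hij
            · rw [SimpleGraph.adj_comm, ((hA j i h).1)]; simp [ht]
          exact ⟨hWinj2, hMXY.xinj, hWind, hMXY.xind, hdia⟩

end Step

end AuxiliaryLemmas

theorem statement13 [Infinite V] (G : SimpleGraph V)
    (hprime : IsPrimeGraph G)
    (hstable : ∃ k : ℕ, ¬ HasHalfGraph G (Fin k))
    (hchain : ∃ n : ℕ, ∀ x1 x2 x3 : V, x1 ≠ x2 → x1 ≠ x3 → x2 ≠ x3 →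
      ∃ m, m ≤ n ∧ ∃ v : Fin (m + 1) → V, GraphChain G {x1, x2} x3 m v)
    (hmatch : HasMatching G ℕ) :
    (HasSubdivStar G ℕ ∨ HasSubdivStar Gᶜ ℕ) ∨
    (HasLineK2 G ℕ ∨ HasLineK2 Gᶜ ℕ) ∨
    (HasSpider G ℕ ∨ HasSpider Gᶜ ℕ) := by
  classical
  obtain ⟨k, hk⟩ := hstable
  obtain ⟨n, hch⟩ := hchain
  obtain ⟨a, b, hainj, hbinj, hab, haind, hbind, hcross⟩ := hmatch
  have hMab : IndMatch G a b := ⟨hainj, hbinj, haind, hbind, hcross⟩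
  -- chains from the pair {a (i+1), b (i+1)} to a 0
  have hstart : ∀ i : ℕ, ∃ m, m ≤ n ∧ ∃ v : Fin (m + 1) → V,
      GraphChain G {a (i + 1), b (i + 1)} (a 0) m v := by
    intro i
    refine hch (a (i + 1)) (b (i + 1)) (a 0) ?_ ?_ ?_
    · exact ((hcross (i + 1) (i + 1)).mpr rfl).ne
    · exact hainj.ne (by omega)
    · exact (hab 0 (i + 1)).symm
  choose m hm v hv using hstart
  set f : ℕ → ℕ → V := fun i t => v i ⟨min t (m i),
    Nat.lt_succ_of_le (Nat.min_le_right _ _)⟩ with hfdef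
  have hfe : ∀ i t (ht : t ≤ m i), f i t = v i ⟨t, Nat.lt_succ_of_le ht⟩ := by
    intro i t ht
    rw [hfdef]
    exact congrArg (v i) (Fin.ext (Nat.min_eq_left ht))
  have hmem0 : ∀ i, f i 0 = a (i + 1) ∨ f i 0 = b (i + 1) := by
    intro i
    have h := (hv i).mem0
    have h0 : ((0 : Fin (m i + 1))) = ⟨0, Nat.lt_succ_of_le (Nat.zero_le _)⟩ :=
      Fin.ext (by simp)
    rw [h0] at h
    rw [hfe i 0 (Nat.zero_le _)]
    simpa [Set.mem_insert_iff] using h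
  have hmem1 : ∀ i, f i 1 = a (i + 1) ∨ f i 1 = b (i + 1) := by
    intro i
    have h := (hv i).mem1
    have h2 := (hv i).two_le
    have h0 : ((1 : Fin (m i + 1))) = ⟨1, by omega⟩ := by
      refine Fin.ext ?_
      rw [Fin.val_one']
      exact Nat.mod_eq_of_lt (by omega)
    rw [h0] at h
    rw [hfe i 1 (by omega)]
    simpa [Set.mem_insert_iff] using h
  have hne01 : ∀ i, f i 0 ≠ f i 1 := by
    intro i heq
    have h2 := (hv i).two_le
    rw [hfe i 0 (Nat.zero_le _), hfe i 1 (by omega)] at heq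
    have := (hv i).inj heq
    simp [Fin.ext_iff] at this
  have hlast : ∀ i, f i (m i) = a 0 := by
    intro i
    have h := (hv i).last_eq
    rw [hfe i (m i) le_rfl]
    rw [show (⟨m i, Nat.lt_succ_of_le le_rfl⟩ : Fin (m i + 1)) = Fin.last (m i) from
      Fin.ext (by simp [Fin.val_last])]
    exact h
  have huniq : ∀ i t, 0 < t → t ≤ m i →
      (∀ s, s < t → (G.Adj (f i t) (f i s) ↔ s + 1 = t)) ∨
      (∀ s, s < t → (¬ G.Adj (f i t) (f i s) ↔ s + 1 = t)) := by
    intro i t ht0 htm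
    rcases (hv i).uniq ⟨t, Nat.lt_succ_of_le htm⟩ (by simpa using ht0) with hu | hu
    · left
      intro s hs
      rw [hfe i t htm, hfe i s (by omega)]
      simpa using hu ⟨s, by omega⟩ (by simpa using hs)
    · right
      intro s hs
      rw [hfe i t htm, hfe i s (by omega)]
      simpa using hu ⟨s, by omega⟩ (by simpa using hs)
  -- pigeonhole on length / side / options pattern
  obtain ⟨g0, hg0, ⟨M, sb, ob⟩, hpat⟩ := myT1 (fun i =>
    ((⟨m i, Nat.lt_succ_of_le (hm i)⟩ : Fin (n + 1)),
     (decide (f i 0 = a (i + 1)) : Bool),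
     (fun t : Fin (n + 2) => (decide (∀ s, s < (t : ℕ) →
       (G.Adj (f i (t : ℕ)) (f i s) ↔ s + 1 = (t : ℕ))) : Bool))))
  have hpat' : ∀ j, m (g0 j) = (M : ℕ) ∧
      (decide (f (g0 j) 0 = a (g0 j + 1)) : Bool) = sb ∧
      (fun t : Fin (n + 2) => (decide (∀ s, s < (t : ℕ) →
        (G.Adj (f (g0 j) (t : ℕ)) (f (g0 j) s) ↔ s + 1 = (t : ℕ))) : Bool)) = ob := by
    intro j
    have h := hpat j
    simp only [Prod.mk.injEq] at h
    exact ⟨congrArg Fin.val h.1, h.2.1, h.2.2⟩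
  set mm := (M : ℕ) with hmmdef
  have hMM : ∀ j, m (g0 j) = mm := fun j => (hpat' j).1
  have hmm2 : 2 ≤ mm := by rw [← hMM 0]; exact (hv (g0 0)).two_le
  have hsb : ∀ j, (f (g0 j) 0 = a (g0 j + 1)) ↔ sb = true := by
    intro j
    rw [← (hpat' j).2.1]
    exact decide_eq_true_iff.symm
  have hob : ∀ j (t : ℕ) (ht : t < n + 2),
      (∀ s, s < t → (G.Adj (f (g0 j) t) (f (g0 j) s) ↔ s + 1 = t)) ↔ ob ⟨t, ht⟩ = true := by
    intro j t ht
    rw [← congrFun (hpat' j).2.2 ⟨t, ht⟩]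
    exact decide_eq_true_iff.symm
  -- uniform options
  have hopt : ∀ t, 0 < t → t ≤ mm →
      (∀ j s, s < t → (G.Adj (f (g0 j) t) (f (g0 j) s) ↔ s + 1 = t)) ∨
      (∀ j s, s < t → (¬ G.Adj (f (g0 j) t) (f (g0 j) s) ↔ s + 1 = t)) := by
    intro t ht0 htm
    have htn : t < n + 2 := by
      have := M.isLt
      omega
    by_cases hopt1 : ob ⟨t, htn⟩ = true
    · left
      intro j
      exact (hob j t htn).mpr hopt1
    · right
      intro j s hs
      rcases huniq (g0 j) t ht0 (by rw [hMM j]; exact htm) with h | h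
      · exact absurd ((hob j t htn).mp h) hopt1
      · exact h s hs
  -- the base matching between levels 0 and 1
  have MAT : IndMatch G (fun j => f (g0 j) 0) (fun j => f (g0 j) 1) := by
    have hginj : Function.Injective (fun j : ℕ => g0 j + 1) :=
      (add_left_injective 1).comp hg0.injective
    rcases Bool.eq_false_or_eq_true sb with hsbv | hsbv
    · -- sb = true : level 0 is a, level 1 is b
      have h0 : (fun j => f (g0 j) 0) = (fun j : ℕ => a (g0 j + 1)) :=
        funext fun j => (hsb j).mpr hsbv
      have h1 : (fun j => f (g0 j) 1) = (fun j : ℕ => b (g0 j + 1)) := by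
        refine funext fun j => ?_
        rcases hmem1 (g0 j) with h | h
        · exfalso
          exact hne01 (g0 j) (((hsb j).mpr hsbv).trans h.symm)
        · exact h
      rw [h0, h1]
      exact hMab.comp hginj
    · -- sb = false : level 0 is b, level 1 is a
      have h0 : (fun j => f (g0 j) 0) = (fun j : ℕ => b (g0 j + 1)) := by
        refine funext fun j => ?_
        rcases hmem0 (g0 j) with h | h
        · exfalso
          have := (hsb j).mp h
          rw [hsbv] at this
          exact absurd this (by simp)
        · exact h
      have h1 : (fun j => f (g0 j) 1) = (fun j : ℕ => a (g0 j + 1)) := by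
        refine funext fun j => ?_
        rcases hmem1 (g0 j) with h | h
        · exact h
        · exfalso
          apply hne01 (g0 j)
          rw [h]
          rcases hmem0 (g0 j) with h' | h'
          · exfalso
            have := (hsb j).mp h'
            rw [hsbv] at this
            exact absurd this (by simp)
          · exact h'.symm ▸ rfl
      rw [h0, h1]
      exact (hMab.comp hginj).symm
  -- main level induction
  have main : ∀ t, 2 ≤ t → t ≤ mm → MOutcome G ∨
      ∃ σ : ℕ → ℕ, StrictMono σ ∧ ∃ tp, tp < t ∧
        IndMatch G (fun j => f (g0 (σ j)) t) (fun j => f (g0 (σ j)) tp) := by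
    intro t ht
    induction t, ht using Nat.le_induction with
    | base =>
      intro h2m
      rcases hopt 2 (by omega) h2m with hO | hO
      · -- option A at level 2 : adjacent to level 1
        have hwx : ∀ j, G.Adj (f (g0 j) 2) (f (g0 j) 1) :=
          fun j => (hO j 1 (by omega)).mpr rfl
        have hwy : ∀ j, ¬ G.Adj (f (g0 j) 2) (f (g0 j) 0) := by
          intro j hadj
          have := (hO j 0 (by omega)).mp hadj
          omega
        rcases mainStep hk MAT.symm hwx hwy with hout | ⟨g, hg, hMg⟩
        · exact Or.inl hout
        · exact Or.inr ⟨g, hg, 1, by omega, hMg⟩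
      · -- option B at level 2 : adjacent to level 0
        have hwx : ∀ j, G.Adj (f (g0 j) 2) (f (g0 j) 0) := by
          intro j
          by_contra hadj
          have := (hO j 0 (by omega)).mp hadj
          omega
        have hwy : ∀ j, ¬ G.Adj (f (g0 j) 2) (f (g0 j) 1) :=
          fun j => (hO j 1 (by omega)).mpr rfl
        rcases mainStep hk MAT hwx hwy with hout | ⟨g, hg, hMg⟩
        · exact Or.inl hout
        · exact Or.inr ⟨g, hg, 0, by omega, hMg⟩
    | succ t ht IH =>
      intro htm1
      rcases IH (by omega) with hout | ⟨σ, hσ, tp, htp, hMt⟩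
      · exact Or.inl hout
      rcases hopt (t + 1) (by omega) htm1 with hO | hO
      · -- option A at level t+1 : adjacent to level t
        have hwx : ∀ j, G.Adj (f (g0 (σ j)) (t + 1)) (f (g0 (σ j)) t) :=
          fun j => (hO (σ j) t (by omega)).mpr rfl
        have hwy : ∀ j, ¬ G.Adj (f (g0 (σ j)) (t + 1)) (f (g0 (σ j)) tp) := by
          intro j hadj
          have := (hO (σ j) tp (by omega)).mp hadj
          omega
        rcases mainStep hk hMt hwx hwy with hout | ⟨g, hg, hMg⟩
        · exact Or.inl hout
        · exact Or.inr ⟨σ ∘ g, hσ.comp hg, t, by omega, hMg⟩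
      · -- option B at level t+1 : adjacent to level tp
        have hwx : ∀ j, G.Adj (f (g0 (σ j)) (t + 1)) (f (g0 (σ j)) tp) := by
          intro j
          by_contra hadj
          have := (hO (σ j) tp (by omega)).mp hadj
          omega
        have hwy : ∀ j, ¬ G.Adj (f (g0 (σ j)) (t + 1)) (f (g0 (σ j)) t) :=
          fun j => (hO (σ j) t (by omega)).mpr rfl
        rcases mainStep hk hMt.symm hwx hwy with hout | ⟨g, hg, hMg⟩
        · exact Or.inl hout
        · exact Or.inr ⟨σ ∘ g, hσ.comp hg, tp, by omega, hMg⟩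
  rcases main mm hmm2 le_rfl with hout | ⟨σ, hσ, tp, htp, hMt⟩
  · exact hout
  · exfalso
    have h0 : f (g0 (σ 0)) mm = a 0 := by
      rw [← hMM (σ 0)]
      exact hlast (g0 (σ 0))
    have h1 : f (g0 (σ 1)) mm = a 0 := by
      rw [← hMM (σ 1)]
      exact hlast (g0 (σ 1))
    have : (0 : ℕ) = 1 := hMt.xinj (h0.trans h1.symm)
    omega
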